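/- For every integer n ≥ 1, Σ_{k=0}^{n} C(n,k)^2 · (-1)^k · k! · (2n-1-k)! / (2n-1)! = 0. -/

import Mathlib

lemma stmt2_aux (n : ℕ) (hn : 1 ≤ n) : ∀ m, m ≤ n →
    ∑ k ∈ Finset.range m,
      ((n.choose k : ℚ)) ^ 2 * (-1 : ℚ) ^ k * (Nat.factorial k : ℚ) *
        (Nat.factorial (2 * n - 1 - k) : ℚ) / (Nat.factorial (2 * n - 1) : ℚ) =
    ((n.choose m : ℚ)) ^ 2 * (-1 : ℚ) ^ m * (Nat.factorial m : ℚ) *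
        (Nat.factorial (2 * n - 1 - m) : ℚ) / (Nat.factorial (2 * n - 1) : ℚ) *
        ((m : ℚ) ^ 2 - 2 * n * m) / (n : ℚ) ^ 2 := by
  intro m
  induction m with
  | zero => simp
  | succ m ih =>
    intro hm
    have hmn : m < n := hm
    have ihm := ih hmn.le
    rw [Finset.sum_range_succ, ihm]
    have hB : (n.choose (m+1) : ℚ) * ((m : ℚ) + 1) = (n.choose m : ℚ) * ((n : ℚ) - m) := by
      have h := Nat.choose_succ_right_eq n m
      calc (n.choose (m+1) : ℚ) * ((m : ℚ) + 1)
          = ((n.choose (m+1) * (m+1) : ℕ) : ℚ) := by push_cast; ring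
        _ = ((n.choose m * (n - m) : ℕ) : ℚ) := by rw [h]
        _ = (n.choose m : ℚ) * ((n : ℚ) - m) := by push_cast [Nat.cast_sub hmn.le]; ring
    have hB2 : (n.choose (m+1) : ℚ) ^ 2 * ((m : ℚ) + 1) ^ 2
        = (n.choose m : ℚ) ^ 2 * ((n : ℚ) - m) ^ 2 := by
      have h : ((n.choose (m+1) : ℚ) * ((m : ℚ) + 1)) ^ 2
          = ((n.choose m : ℚ) * ((n : ℚ) - m)) ^ 2 := by rw [hB]
      linear_combination h
    have hf1 : (Nat.factorial (m+1) : ℚ) = ((m : ℚ) + 1) * (Nat.factorial m : ℚ) := by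
      push_cast [Nat.factorial_succ]; ring
    have e1 : 2 * n - 1 - m = (2 * n - 1 - (m + 1)) + 1 := by omega
    have hc2 : ((2 * n - 1 - (m + 1) : ℕ) : ℚ) = 2 * (n : ℚ) - 2 - m := by
      have h2 : (2 * n - 1 - (m + 1)) + (m + 2) = 2 * n := by omega
      have h3 := congrArg (Nat.cast (R := ℚ)) h2
      push_cast at h3
      linarith
    have hf2 : (Nat.factorial (2 * n - 1 - m) : ℚ)
        = (2 * (n : ℚ) - 1 - m) * (Nat.factorial (2 * n - 1 - (m + 1)) : ℚ) := by
      rw [e1, Nat.factorial_succ]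
      push_cast [hc2]
      ring
    have N : ((n.choose (m+1) : ℚ)) ^ 2 * (-1 : ℚ) ^ (m+1) * (Nat.factorial (m+1) : ℚ) *
          (Nat.factorial (2 * n - 1 - (m+1)) : ℚ) * ((((m:ℚ)+1)) ^ 2 - 2 * n * ((m:ℚ)+1))
        = ((n.choose m : ℚ)) ^ 2 * (-1 : ℚ) ^ m * (Nat.factorial m : ℚ) *
          (Nat.factorial (2 * n - 1 - m) : ℚ) * ((m : ℚ) ^ 2 - 2 * n * m + (n:ℚ)^2) := by
      rw [pow_succ, hf1, hf2]
      linear_combination ((-1:ℚ)^m * (Nat.factorial m : ℚ)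
        * (Nat.factorial (2 * n - 1 - (m+1)) : ℚ) * (2*(n:ℚ)-1-m)) * hB2
    push_cast
    have hn0 : (n:ℚ) ≠ 0 := Nat.cast_ne_zero.mpr (by omega)
    have hfac : (Nat.factorial (2*n-1) : ℚ) ≠ 0 := by exact_mod_cast Nat.factorial_ne_zero _
    field_simp
    linear_combination (-1:ℚ) * N

theorem stmt2 (n : ℕ) (hn : 1 ≤ n) :
    ∑ k ∈ Finset.range (n + 1),
      ((n.choose k : ℚ)) ^ 2 * (-1 : ℚ) ^ k * (Nat.factorial k : ℚ) *
        (Nat.factorial (2 * n - 1 - k) : ℚ) / (Nat.factorial (2 * n - 1) : ℚ) = 0 := by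
  rw [Finset.sum_range_succ, stmt2_aux n hn n le_rfl]
  have hn0 : (n : ℚ) ≠ 0 := Nat.cast_ne_zero.mpr (by omega)
  field_simp
  ring
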